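/- The quantifier-elimination rewrite relation → on formulas is confluent: for all formulas F₀, F₁, F₂ with F₀ →* F₁ and F₀ →* F₂, there exists a formula F₃ with F₁ →* F₃ and F₂ →* F₃. -/

import Mathlib

mutual
  /-- Terms of first-order logic extended with Hilbert's ε-operator,
  in de Bruijn representation (so formulas are automatically identified up
  to renaming of bound variables). -/
  inductive Tm : Type
    | var : ℕ → Tm
    | fn : ℕ → (k : ℕ) → (Fin k → Tm) → Tm
    | eps : Fm → Tm
  /-- Formulas; `ex F`, `all F` and `Tm.eps F` bind de Bruijn index 0 of `F`. -/
  inductive Fm : Type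
    | pred : ℕ → (k : ℕ) → (Fin k → Tm) → Fm
    | not : Fm → Fm
    | or : Fm → Fm → Fm
    | and : Fm → Fm → Fm
    | imp : Fm → Fm → Fm
    | ex : Fm → Fm
    | all : Fm → Fm
end

/-- Lifting a renaming under a binder. -/
def upRen (r : ℕ → ℕ) : ℕ → ℕ
  | 0 => 0
  | n + 1 => r n + 1

mutual
  /-- Renaming of free variables in a term. -/
  def renT (r : ℕ → ℕ) : Tm → Tm
    | .var i => .var (r i)
    | .fn f k a => .fn f k (fun i => renT r (a i))
    | .eps F => .eps (renF (upRen r) F)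
  /-- Renaming of free variables in a formula. -/
  def renF (r : ℕ → ℕ) : Fm → Fm
    | .pred p k a => .pred p k (fun i => renT r (a i))
    | .not F => .not (renF r F)
    | .or F G => .or (renF r F) (renF r G)
    | .and F G => .and (renF r F) (renF r G)
    | .imp F G => .imp (renF r F) (renF r G)
    | .ex F => .ex (renF (upRen r) F)
    | .all F => .all (renF (upRen r) F)
end

/-- Lifting a substitution under a binder. -/
def upSub (σ : ℕ → Tm) : ℕ → Tm
  | 0 => .var 0
  | n + 1 => renT Nat.succ (σ n)

mutual
  /-- Capture-avoiding simultaneous substitution on terms. -/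
  def subT (σ : ℕ → Tm) : Tm → Tm
    | .var i => σ i
    | .fn f k a => .fn f k (fun i => subT σ (a i))
    | .eps F => .eps (subF (upSub σ) F)
  /-- Capture-avoiding simultaneous substitution on formulas. -/
  def subF (σ : ℕ → Tm) : Fm → Fm
    | .pred p k a => .pred p k (fun i => subT σ (a i))
    | .not F => .not (subF σ F)
    | .or F G => .or (subF σ F) (subF σ G)
    | .and F G => .and (subF σ F) (subF σ G)
    | .imp F G => .imp (subF σ F) (subF σ G)
    | .ex F => .ex (subF (upSub σ) F)
    | .all F => .all (subF (upSub σ) F)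
end

/-- `inst1 F t` is `F{x ↦ t}` for the variable `x` bound just outside `F`
(de Bruijn index 0). -/
def inst1 (F : Fm) (t : Tm) : Fm :=
  subF (fun n => match n with | 0 => t | n + 1 => .var n) F

mutual
  /-- The variable with de Bruijn index `n` occurs free in the term. -/
  def freeT (n : ℕ) : Tm → Prop
    | .var i => i = n
    | .fn _ _ a => ∃ i, freeT n (a i)
    | .eps F => freeF (n + 1) F
  /-- The variable with de Bruijn index `n` occurs free in the formula. -/
  def freeF (n : ℕ) : Fm → Prop
    | .pred _ _ a => ∃ i, freeT n (a i)
    | .not F => freeF n F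
    | .or F G => freeF n F ∨ freeF n G
    | .and F G => freeF n F ∨ freeF n G
    | .imp F G => freeF n F ∨ freeF n G
    | .ex F => freeF (n + 1) F
    | .all F => freeF (n + 1) F
end

mutual
  /-- Number of occurrences of quantifiers (∃ and ∀, but not ε) in a term. -/
  def qcT : Tm → ℕ
    | .var _ => 0
    | .fn _ _ a => ∑ i, qcT (a i)
    | .eps F => qcF F
  /-- Number of occurrences of quantifiers (∃ and ∀, but not ε) in a formula. -/
  def qcF : Fm → ℕ
    | .pred _ _ a => ∑ i, qcT (a i)
    | .not F => qcF F
    | .or F G => qcF F + qcF G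
    | .and F G => qcF F + qcF G
    | .imp F G => qcF F + qcF G
    | .ex F => qcF F + 1
    | .all F => qcF F + 1
end

/-- Quantifier symbols. -/
inductive Quant : Type
  | ex
  | all

/-- `mkQ Q A` is the quantified formula `Qx. A`. -/
def mkQ : Quant → Fm → Fm
  | .ex, A => .ex A
  | .all, A => .all A

/-- `negQ Q A` is `¬^Q A`: `¬A` for `Q = ∀` and `A` for `Q = ∃`. -/
def negQ : Quant → Fm → Fm
  | .ex, A => A
  | .all, A => .not A

/-- `qeRedex Q A` is `A{x ↦ εx. ¬^Q A}`, the contractum of the redex `Qx. A`. -/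
def qeRedex (Q : Quant) (A : Fm) : Fm := inst1 A (.eps (negQ Q A))

mutual
  /-- One rewrite step inside a term, where each rewritten quantified subformula
  `Qx. A` is required to satisfy the side condition `P A`. -/
  inductive StepT (P : Fm → Prop) : Tm → Tm → Prop
    | fn {f k} {a : Fin k → Tm} {j : Fin k} {t' : Tm} :
        StepT P (a j) t' → StepT P (.fn f k a) (.fn f k (Function.update a j t'))
    | eps {F F'} : StepF P F F' → StepT P (.eps F) (.eps F')
  /-- One rewrite step on formulas: replace one occurrence of a subformula
  `Qx. A` (with `P A`) by `A{x ↦ εx. ¬^Q A}`. -/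
  inductive StepF (P : Fm → Prop) : Fm → Fm → Prop
    | root {Q A} : P A → StepF P (mkQ Q A) (qeRedex Q A)
    | pred {p k} {a : Fin k → Tm} {j : Fin k} {t' : Tm} :
        StepT P (a j) t' → StepF P (.pred p k a) (.pred p k (Function.update a j t'))
    | not {F F'} : StepF P F F' → StepF P (.not F) (.not F')
    | orL {F F' G} : StepF P F F' → StepF P (.or F G) (.or F' G)
    | orR {F G G'} : StepF P G G' → StepF P (.or F G) (.or F G')
    | andL {F F' G} : StepF P F F' → StepF P (.and F G) (.and F' G)
    | andR {F G G'} : StepF P G G' → StepF P (.and F G) (.and F G')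
    | impL {F F' G} : StepF P F F' → StepF P (.imp F G) (.imp F' G)
    | impR {F G G'} : StepF P G G' → StepF P (.imp F G) (.imp F G')
    | ex {F F'} : StepF P F F' → StepF P (.ex F) (.ex F')
    | all {F F'} : StepF P F F' → StepF P (.all F) (.all F')
end

/-- The quantifier-elimination rewrite relation `→` on formulas. -/
def Step : Fm → Fm → Prop := StepF (fun _ => True)

/-- `→₀`: the steps rewriting a vacuous quantifier (bound variable not free in the body). -/
def Step0 : Fm → Fm → Prop := StepF (fun A => ¬ freeF 0 A)

/-- `→₁`: the steps rewriting a non-vacuous quantifier. -/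
def Step1 : Fm → Fm → Prop := StepF (fun A => freeF 0 A)

/-- `→ℐ`: the innermost steps, whose rewritten subformula `Qx. A` contains no
quantifier other than the outermost `Q`. -/
def StepI : Fm → Fm → Prop := StepF (fun A => qcF A = 0)


/-! ### A size measure for well-founded recursion on derivations -/

mutual
  def szT : Tm → ℕ
    | .var _ => 1
    | .fn _ _ a => (∑ i, szT (a i)) + 1
    | .eps F => szF F + 1
  def szF : Fm → ℕ
    | .pred _ _ a => (∑ i, szT (a i)) + 1
    | .not F => szF F + 1
    | .or F G => szF F + szF G + 1
    | .and F G => szF F + szF G + 1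
    | .imp F G => szF F + szF G + 1
    | .ex F => szF F + 1
    | .all F => szF F + 1
end

theorem szT_fn_lt {f k} (a : Fin k → Tm) (i : Fin k) : szT (a i) < szT (.fn f k a) := by
  have : szT (a i) ≤ ∑ j, szT (a j) :=
    Finset.single_le_sum (f := fun j => szT (a j)) (fun j _ => Nat.zero_le _) (Finset.mem_univ i)
  simp only [szT]; omega

theorem szT_pred_lt {p k} (a : Fin k → Tm) (i : Fin k) : szT (a i) < szF (.pred p k a) := by
  have : szT (a i) ≤ ∑ j, szT (a j) :=
    Finset.single_le_sum (f := fun j => szT (a j)) (fun j _ => Nat.zero_le _) (Finset.mem_univ i)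
  simp only [szF]; omega

theorem szF_mkQ_lt (Q : Quant) (A : Fm) : szF A < szF (mkQ Q A) := by
  cases Q <;> simp [mkQ, szF]
/-! ### Substitution algebra -/

mutual
theorem renT_ext {r s : ℕ → ℕ} (h : ∀ n, r n = s n) : ∀ t, renT r t = renT s t
  | .var i => by simp only [renT, h]
  | .fn f k a => by
      simp only [renT]
      exact congrArg _ (funext fun i => renT_ext h (a i))
  | .eps F => by
      simp only [renT]
      exact congrArg _ (renF_ext (fun n => by cases n <;> simp [upRen, h]) F)
theorem renF_ext {r s : ℕ → ℕ} (h : ∀ n, r n = s n) : ∀ F, renF r F = renF s F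
  | .pred p k a => by
      simp only [renF]
      exact congrArg _ (funext fun i => renT_ext h (a i))
  | .not F => by simp only [renF]; exact congrArg _ (renF_ext h F)
  | .or F G => by simp only [renF]; exact congrArg₂ _ (renF_ext h F) (renF_ext h G)
  | .and F G => by simp only [renF]; exact congrArg₂ _ (renF_ext h F) (renF_ext h G)
  | .imp F G => by simp only [renF]; exact congrArg₂ _ (renF_ext h F) (renF_ext h G)
  | .ex F => by
      simp only [renF]
      exact congrArg _ (renF_ext (fun n => by cases n <;> simp [upRen, h]) F)
  | .all F => by
      simp only [renF]
      exact congrArg _ (renF_ext (fun n => by cases n <;> simp [upRen, h]) F)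
end
mutual
theorem renT_renT {r s u : ℕ → ℕ} (h : ∀ n, r (s n) = u n) :
    ∀ t, renT r (renT s t) = renT u t
  | .var i => by simp only [renT, h]
  | .fn f k a => by
      simp only [renT]
      exact congrArg _ (funext fun i => renT_renT h (a i))
  | .eps F => by
      simp only [renT]
      exact congrArg _ (renF_renF (fun n => by cases n <;> simp [upRen, h]) F)
theorem renF_renF {r s u : ℕ → ℕ} (h : ∀ n, r (s n) = u n) :
    ∀ F, renF r (renF s F) = renF u F
  | .pred p k a => by
      simp only [renF]
      exact congrArg _ (funext fun i => renT_renT h (a i))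
  | .not F => by simp only [renF]; exact congrArg _ (renF_renF h F)
  | .or F G => by simp only [renF]; exact congrArg₂ _ (renF_renF h F) (renF_renF h G)
  | .and F G => by simp only [renF]; exact congrArg₂ _ (renF_renF h F) (renF_renF h G)
  | .imp F G => by simp only [renF]; exact congrArg₂ _ (renF_renF h F) (renF_renF h G)
  | .ex F => by
      simp only [renF]
      exact congrArg _ (renF_renF (fun n => by cases n <;> simp [upRen, h]) F)
  | .all F => by
      simp only [renF]
      exact congrArg _ (renF_renF (fun n => by cases n <;> simp [upRen, h]) F)
end

theorem upSub_upRen {σ : ℕ → Tm} {r : ℕ → ℕ} {τ : ℕ → Tm} (h : ∀ n, σ (r n) = τ n) :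
    ∀ n, upSub σ (upRen r n) = upSub τ n
  | 0 => rfl
  | n + 1 => by simp [upRen, upSub, h]

mutual
theorem subT_renT {σ : ℕ → Tm} {r : ℕ → ℕ} {τ : ℕ → Tm} (h : ∀ n, σ (r n) = τ n) :
    ∀ t, subT σ (renT r t) = subT τ t
  | .var i => by simp only [renT, subT, h]
  | .fn f k a => by
      simp only [renT, subT]
      exact congrArg _ (funext fun i => subT_renT h (a i))
  | .eps F => by
      simp only [renT, subT]
      exact congrArg _ (subF_renF (upSub_upRen h) F)
theorem subF_renF {σ : ℕ → Tm} {r : ℕ → ℕ} {τ : ℕ → Tm} (h : ∀ n, σ (r n) = τ n) :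
    ∀ F, subF σ (renF r F) = subF τ F
  | .pred p k a => by
      simp only [renF, subF]
      exact congrArg _ (funext fun i => subT_renT h (a i))
  | .not F => by simp only [renF, subF]; exact congrArg _ (subF_renF h F)
  | .or F G => by simp only [renF, subF]; exact congrArg₂ _ (subF_renF h F) (subF_renF h G)
  | .and F G => by simp only [renF, subF]; exact congrArg₂ _ (subF_renF h F) (subF_renF h G)
  | .imp F G => by simp only [renF, subF]; exact congrArg₂ _ (subF_renF h F) (subF_renF h G)
  | .ex F => by
      simp only [renF, subF]
      exact congrArg _ (subF_renF (upSub_upRen h) F)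
  | .all F => by
      simp only [renF, subF]
      exact congrArg _ (subF_renF (upSub_upRen h) F)
end

theorem upRen_upSub {r : ℕ → ℕ} {σ τ : ℕ → Tm} (h : ∀ n, renT r (σ n) = τ n) :
    ∀ n, renT (upRen r) (upSub σ n) = upSub τ n
  | 0 => rfl
  | n + 1 => by
      simp only [upSub]
      rw [renT_renT (s := Nat.succ) (u := fun m => Nat.succ (r m)) (fun m => rfl) (σ n),
        ← renT_renT (r := Nat.succ) (s := r) (u := fun m => Nat.succ (r m)) (fun m => rfl) (σ n),
        h n]

mutual
theorem renT_subT {r : ℕ → ℕ} {σ τ : ℕ → Tm} (h : ∀ n, renT r (σ n) = τ n) :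
    ∀ t, renT r (subT σ t) = subT τ t
  | .var i => by simp only [subT, h]
  | .fn f k a => by
      simp only [renT, subT]
      exact congrArg _ (funext fun i => renT_subT h (a i))
  | .eps F => by
      simp only [renT, subT]
      exact congrArg _ (renF_subF (upRen_upSub h) F)
theorem renF_subF {r : ℕ → ℕ} {σ τ : ℕ → Tm} (h : ∀ n, renT r (σ n) = τ n) :
    ∀ F, renF r (subF σ F) = subF τ F
  | .pred p k a => by
      simp only [renF, subF]
      exact congrArg _ (funext fun i => renT_subT h (a i))
  | .not F => by simp only [renF, subF]; exact congrArg _ (renF_subF h F)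
  | .or F G => by simp only [renF, subF]; exact congrArg₂ _ (renF_subF h F) (renF_subF h G)
  | .and F G => by simp only [renF, subF]; exact congrArg₂ _ (renF_subF h F) (renF_subF h G)
  | .imp F G => by simp only [renF, subF]; exact congrArg₂ _ (renF_subF h F) (renF_subF h G)
  | .ex F => by
      simp only [renF, subF]
      exact congrArg _ (renF_subF (upRen_upSub h) F)
  | .all F => by
      simp only [renF, subF]
      exact congrArg _ (renF_subF (upRen_upSub h) F)
end

theorem upSub_upSub {σ τ ρ : ℕ → Tm} (h : ∀ n, subT τ (σ n) = ρ n) :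
    ∀ n, subT (upSub τ) (upSub σ n) = upSub ρ n
  | 0 => rfl
  | n + 1 => by
      simp only [upSub]
      rw [subT_renT (r := Nat.succ) (τ := fun m => renT Nat.succ (τ m)) (fun m => rfl) (σ n),
        ← h n, ← renT_subT (r := Nat.succ) (σ := τ) (τ := fun m => renT Nat.succ (τ m)) (fun m => rfl) (σ n)]

mutual
theorem subT_subT {σ τ ρ : ℕ → Tm} (h : ∀ n, subT τ (σ n) = ρ n) :
    ∀ t, subT τ (subT σ t) = subT ρ t
  | .var i => by simp only [subT, h]
  | .fn f k a => by
      simp only [subT]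
      exact congrArg _ (funext fun i => subT_subT h (a i))
  | .eps F => by
      simp only [subT]
      exact congrArg _ (subF_subF (upSub_upSub h) F)
theorem subF_subF {σ τ ρ : ℕ → Tm} (h : ∀ n, subT τ (σ n) = ρ n) :
    ∀ F, subF τ (subF σ F) = subF ρ F
  | .pred p k a => by
      simp only [subF]
      exact congrArg _ (funext fun i => subT_subT h (a i))
  | .not F => by simp only [subF]; exact congrArg _ (subF_subF h F)
  | .or F G => by simp only [subF]; exact congrArg₂ _ (subF_subF h F) (subF_subF h G)
  | .and F G => by simp only [subF]; exact congrArg₂ _ (subF_subF h F) (subF_subF h G)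
  | .imp F G => by simp only [subF]; exact congrArg₂ _ (subF_subF h F) (subF_subF h G)
  | .ex F => by
      simp only [subF]
      exact congrArg _ (subF_subF (upSub_upSub h) F)
  | .all F => by
      simp only [subF]
      exact congrArg _ (subF_subF (upSub_upSub h) F)
end

mutual
theorem subT_id {σ : ℕ → Tm} (h : ∀ n, σ n = .var n) : ∀ t, subT σ t = t
  | .var i => by simp only [subT, h]
  | .fn f k a => by
      simp only [subT]
      exact congrArg _ (funext fun i => subT_id h (a i))
  | .eps F => by
      simp only [subT]
      exact congrArg _ (subF_id (fun n => by cases n <;> simp [upSub, h, renT]) F)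
theorem subF_id {σ : ℕ → Tm} (h : ∀ n, σ n = .var n) : ∀ F, subF σ F = F
  | .pred p k a => by
      simp only [subF]
      exact congrArg _ (funext fun i => subT_id h (a i))
  | .not F => by simp only [subF]; exact congrArg _ (subF_id h F)
  | .or F G => by simp only [subF]; exact congrArg₂ _ (subF_id h F) (subF_id h G)
  | .and F G => by simp only [subF]; exact congrArg₂ _ (subF_id h F) (subF_id h G)
  | .imp F G => by simp only [subF]; exact congrArg₂ _ (subF_id h F) (subF_id h G)
  | .ex F => by
      simp only [subF]
      exact congrArg _ (subF_id (fun n => by cases n <;> simp [upSub, h, renT]) F)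
  | .all F => by
      simp only [subF]
      exact congrArg _ (subF_id (fun n => by cases n <;> simp [upSub, h, renT]) F)
end
/-! ### `mkQ`, `negQ`, `qeRedex` under renaming and substitution -/

theorem renF_negQ (r : ℕ → ℕ) (Q : Quant) (A : Fm) :
    renF r (negQ Q A) = negQ Q (renF r A) := by cases Q <;> rfl
theorem renF_mkQ (r : ℕ → ℕ) (Q : Quant) (A : Fm) :
    renF r (mkQ Q A) = mkQ Q (renF (upRen r) A) := by cases Q <;> rfl
theorem subF_negQ (σ : ℕ → Tm) (Q : Quant) (A : Fm) :
    subF σ (negQ Q A) = negQ Q (subF σ A) := by cases Q <;> rfl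
theorem subF_mkQ (σ : ℕ → Tm) (Q : Quant) (A : Fm) :
    subF σ (mkQ Q A) = mkQ Q (subF (upSub σ) A) := by cases Q <;> rfl

theorem renF_qeRedex (r : ℕ → ℕ) (Q : Quant) (A : Fm) :
    renF r (qeRedex Q A) = qeRedex Q (renF (upRen r) A) := by
  show renF r (subF _ A) = subF _ (renF (upRen r) A)
  rw [subF_renF (τ := fun n => match n with
        | 0 => Tm.eps (negQ Q (renF (upRen r) A))
        | n + 1 => Tm.var (r n))
      (fun n => by cases n <;> rfl) A]
  exact renF_subF (fun n => by
    cases n with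
    | zero => simp only [renT, renF_negQ]
    | succ n => rfl) A

theorem subF_qeRedex (τ : ℕ → Tm) (Q : Quant) (A : Fm) :
    subF τ (qeRedex Q A) = qeRedex Q (subF (upSub τ) A) := by
  show subF τ (subF _ A) = subF _ (subF (upSub τ) A)
  rw [subF_subF (ρ := fun n => match n with
        | 0 => Tm.eps (negQ Q (subF (upSub τ) A))
        | n + 1 => τ n)
      (fun n => by
        cases n with
        | zero => simp only [subT, subF_negQ]
        | succ n => rfl) A]
  exact (subF_subF (σ := upSub τ)
    (τ := fun n => match n with
      | 0 => Tm.eps (negQ Q (subF (upSub τ) A))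
      | n + 1 => Tm.var n)
    (ρ := fun n => match n with
      | 0 => Tm.eps (negQ Q (subF (upSub τ) A))
      | n + 1 => τ n)
    (fun n => by
      cases n with
      | zero => rfl
      | succ n =>
          show subT _ (renT Nat.succ (τ n)) = τ n
          rw [subT_renT (r := Nat.succ) (τ := Tm.var) (fun m => rfl) (τ n)]
          exact subT_id (fun m => rfl) (τ n)) A).symm
/-! ### Parallel reduction -/

mutual
  /-- Parallel reduction on terms. -/
  inductive ParT : Tm → Tm → Prop
    | var (n : ℕ) : ParT (.var n) (.var n)
    | fn {f k} {a a' : Fin k → Tm} :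
        (∀ i, ParT (a i) (a' i)) → ParT (.fn f k a) (.fn f k a')
    | eps {F F'} : ParF F F' → ParT (.eps F) (.eps F')
  /-- Parallel reduction on formulas. -/
  inductive ParF : Fm → Fm → Prop
    | pred {p k} {a a' : Fin k → Tm} :
        (∀ i, ParT (a i) (a' i)) → ParF (.pred p k a) (.pred p k a')
    | not {F F'} : ParF F F' → ParF (.not F) (.not F')
    | or {F F' G G'} : ParF F F' → ParF G G' → ParF (.or F G) (.or F' G')
    | and {F F' G G'} : ParF F F' → ParF G G' → ParF (.and F G) (.and F' G')
    | imp {F F' G G'} : ParF F F' → ParF G G' → ParF (.imp F G) (.imp F' G')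
    | ex {F F'} : ParF F F' → ParF (.ex F) (.ex F')
    | all {F F'} : ParF F F' → ParF (.all F) (.all F')
    | root {Q A A'} : ParF A A' → ParF (mkQ Q A) (qeRedex Q A')
end

mutual
theorem parT_refl : ∀ t, ParT t t
  | .var i => .var i
  | .fn f k a => .fn (fun i => parT_refl (a i))
  | .eps F => .eps (parF_refl F)
theorem parF_refl : ∀ F, ParF F F
  | .pred p k a => .pred (fun i => parT_refl (a i))
  | .not F => .not (parF_refl F)
  | .or F G => .or (parF_refl F) (parF_refl G)
  | .and F G => .and (parF_refl F) (parF_refl G)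
  | .imp F G => .imp (parF_refl F) (parF_refl G)
  | .ex F => .ex (parF_refl F)
  | .all F => .all (parF_refl F)
end

mutual
theorem parT_ren {r : ℕ → ℕ} {t t'} (h : ParT t t') : ParT (renT r t) (renT r t') := by
  cases h with
  | var n => exact .var (r n)
  | fn h => exact .fn (fun i => parT_ren (h i))
  | eps h => exact .eps (parF_ren h)
termination_by szT t
decreasing_by all_goals
  first
    | exact szT_fn_lt _ _
    | exact szT_pred_lt _ _
    | exact szF_mkQ_lt _ _
    | (simp [szT, szF] <;> omega)
theorem parF_ren {r : ℕ → ℕ} {F F'} (h : ParF F F') : ParF (renF r F) (renF r F') := by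
  cases h with
  | pred h => exact .pred (fun i => parT_ren (h i))
  | not h => exact .not (parF_ren h)
  | or h g => exact .or (parF_ren h) (parF_ren g)
  | and h g => exact .and (parF_ren h) (parF_ren g)
  | imp h g => exact .imp (parF_ren h) (parF_ren g)
  | ex h => exact .ex (parF_ren h)
  | all h => exact .all (parF_ren h)
  | @root Q A A' h =>
      rw [renF_mkQ, renF_qeRedex]
      exact .root (parF_ren h)
termination_by szF F
decreasing_by all_goals
  first
    | exact szT_fn_lt _ _
    | exact szT_pred_lt _ _
    | exact szF_mkQ_lt _ _
    | (simp [szT, szF] <;> omega)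
end

/-- Pointwise parallel reduction of substitutions. -/
def ParS (σ τ : ℕ → Tm) : Prop := ∀ n, ParT (σ n) (τ n)

theorem ParS.up {σ τ : ℕ → Tm} (h : ParS σ τ) : ParS (upSub σ) (upSub τ) := by
  intro n
  cases n with
  | zero => exact .var 0
  | succ n => exact parT_ren (h n)

mutual
theorem parT_sub {σ τ : ℕ → Tm} {t t'} (hs : ParS σ τ) (h : ParT t t') :
    ParT (subT σ t) (subT τ t') := by
  cases h with
  | var n => exact hs n
  | fn h => exact .fn (fun i => parT_sub hs (h i))
  | eps h => exact .eps (parF_sub hs.up h)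
termination_by szT t
decreasing_by all_goals
  first
    | exact szT_fn_lt _ _
    | exact szT_pred_lt _ _
    | exact szF_mkQ_lt _ _
    | (simp [szT, szF] <;> omega)
theorem parF_sub {σ τ : ℕ → Tm} {F F'} (hs : ParS σ τ) (h : ParF F F') :
    ParF (subF σ F) (subF τ F') := by
  cases h with
  | pred h => exact .pred (fun i => parT_sub hs (h i))
  | not h => exact .not (parF_sub hs h)
  | or h g => exact .or (parF_sub hs h) (parF_sub hs g)
  | and h g => exact .and (parF_sub hs h) (parF_sub hs g)
  | imp h g => exact .imp (parF_sub hs h) (parF_sub hs g)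
  | ex h => exact .ex (parF_sub hs.up h)
  | all h => exact .all (parF_sub hs.up h)
  | @root Q A A' h =>
      rw [subF_mkQ, subF_qeRedex]
      exact .root (parF_sub hs.up h)
termination_by szF F
decreasing_by all_goals
  first
    | exact szT_fn_lt _ _
    | exact szT_pred_lt _ _
    | exact szF_mkQ_lt _ _
    | (simp [szT, szF] <;> omega)
end

theorem ParF.negQ' {Q : Quant} {A A'} (h : ParF A A') : ParF (negQ Q A) (negQ Q A') := by
  cases Q with
  | ex => exact h
  | all => exact .not h

theorem ParF.qeRedex' {Q : Quant} {A A'} (h : ParF A A') :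
    ParF (qeRedex Q A) (qeRedex Q A') := by
  apply parF_sub (σ := fun n => match n with | 0 => Tm.eps (negQ Q A) | n + 1 => Tm.var n)
    (τ := fun n => match n with | 0 => Tm.eps (negQ Q A') | n + 1 => Tm.var n) ?_ h
  intro n
  cases n with
  | zero => exact .eps h.negQ'
  | succ n => exact .var n
/-! ### Complete development and the triangle property -/

mutual
  /-- Complete development of a term: contract all quantifier redexes. -/
  def cdT : Tm → Tm
    | .var n => .var n
    | .fn f k a => .fn f k (fun i => cdT (a i))
    | .eps F => .eps (cdF F)
  /-- Complete development of a formula. -/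
  def cdF : Fm → Fm
    | .pred p k a => .pred p k (fun i => cdT (a i))
    | .not F => .not (cdF F)
    | .or F G => .or (cdF F) (cdF G)
    | .and F G => .and (cdF F) (cdF G)
    | .imp F G => .imp (cdF F) (cdF G)
    | .ex F => qeRedex .ex (cdF F)
    | .all F => qeRedex .all (cdF F)
end

mutual
theorem parT_tri {t u : Tm} (h : ParT t u) : ParT u (cdT t) := by
  cases h with
  | var n => exact .var n
  | fn h => exact .fn (fun i => parT_tri (h i))
  | eps h => exact .eps (parF_tri h)
termination_by szT t
decreasing_by all_goals
  first
    | exact szT_fn_lt _ _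
    | exact szT_pred_lt _ _
    | exact szF_mkQ_lt _ _
    | (simp [szT, szF] <;> omega)
theorem parF_tri {F G : Fm} (h : ParF F G) : ParF G (cdF F) := by
  cases h with
  | pred h => exact .pred (fun i => parT_tri (h i))
  | not h => exact .not (parF_tri h)
  | or h g => exact .or (parF_tri h) (parF_tri g)
  | and h g => exact .and (parF_tri h) (parF_tri g)
  | imp h g => exact .imp (parF_tri h) (parF_tri g)
  | @ex F F' h => exact ParF.root (Q := .ex) (parF_tri h)
  | @all F F' h => exact ParF.root (Q := .all) (parF_tri h)
  | @root Q A A' h =>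
      have ih : ParF A' (cdF A) := parF_tri h
      cases Q with
      | ex => exact ih.qeRedex'
      | all => exact ih.qeRedex'
termination_by szF F
decreasing_by all_goals
  first
    | exact szT_fn_lt _ _
    | exact szT_pred_lt _ _
    | exact szF_mkQ_lt _ _
    | (simp [szT, szF] <;> omega)
end

/-! ### `Step ⊆ Par` -/

mutual
theorem stepT_par {P} {t t' : Tm} (h : StepT P t t') : ParT t t' := by
  cases h with
  | @fn f k a j t' h =>
      refine .fn (fun i => ?_)
      by_cases hij : i = j
      · subst hij; rw [Function.update_self]; exact stepT_par h
      · rw [Function.update_of_ne hij]; exact parT_refl _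
  | eps h => exact .eps (stepF_par h)
termination_by szT t
decreasing_by all_goals
  first
    | exact szT_fn_lt _ _
    | exact szT_pred_lt _ _
    | exact szF_mkQ_lt _ _
    | (simp [szT, szF] <;> omega)
theorem stepF_par {P} {F F' : Fm} (h : StepF P F F') : ParF F F' := by
  cases h with
  | root _ => exact .root (parF_refl _)
  | @pred p k a j t' h =>
      refine .pred (fun i => ?_)
      by_cases hij : i = j
      · subst hij; rw [Function.update_self]; exact stepT_par h
      · rw [Function.update_of_ne hij]; exact parT_refl _
  | not h => exact .not (stepF_par h)
  | orL h => exact .or (stepF_par h) (parF_refl _)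
  | orR h => exact .or (parF_refl _) (stepF_par h)
  | andL h => exact .and (stepF_par h) (parF_refl _)
  | andR h => exact .and (parF_refl _) (stepF_par h)
  | impL h => exact .imp (stepF_par h) (parF_refl _)
  | impR h => exact .imp (parF_refl _) (stepF_par h)
  | ex h => exact .ex (stepF_par h)
  | all h => exact .all (stepF_par h)
termination_by szF F
decreasing_by all_goals
  first
    | exact szT_fn_lt _ _
    | exact szT_pred_lt _ _
    | exact szF_mkQ_lt _ _
    | (simp [szT, szF] <;> omega)
end

/-! ### `Par ⊆ Step*` -/

open Relation in
theorem fn_steps {P f k} {a a' : Fin k → Tm}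
    (h : ∀ i, ReflTransGen (StepT P) (a i) (a' i)) :
    ReflTransGen (StepT P) (.fn f k a) (.fn f k a') := by
  have key : ∀ (j : ℕ) (b : Fin k → Tm), (∀ i, ReflTransGen (StepT P) (b i) (a' i)) →
      (∀ i : Fin k, j ≤ i.val → b i = a' i) →
      ReflTransGen (StepT P) (.fn f k b) (.fn f k a') := by
    intro j
    induction j with
    | zero =>
        intro b _ h0
        have : b = a' := funext fun i => h0 i (Nat.zero_le _)
        rw [this]
    | succ j ih =>
        intro b hb h0
        by_cases hj : j < k
        · set jf : Fin k := ⟨j, hj⟩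
          have step1 : ReflTransGen (StepT P) (.fn f k b) (.fn f k (Function.update b jf (a' jf))) := by
            have := ReflTransGen.lift (fun t => Tm.fn f k (Function.update b jf t))
              (fun x y s => by
                have := StepT.fn (f := f) (a := Function.update b jf x) (j := jf)
                  (t' := y) (by rw [Function.update_self]; exact s)
                rwa [Function.update_idem] at this) _ _ (hb jf)
            simpa only [Function.onFun, Function.update_eq_self] using this
          refine step1.trans (ih _ (fun i => ?_) (fun i hi => ?_))
          · by_cases hij : i = jf
            · subst hij; rw [Function.update_self]
            · rw [Function.update_of_ne hij]; exact hb i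
          · by_cases hij : i = jf
            · subst hij; rw [Function.update_self]
            · rw [Function.update_of_ne hij]
              refine h0 i ?_
              have : i.val ≠ j := fun hv => hij (Fin.ext hv)
              omega
        · refine ih b hb (fun i hi => ?_)
          have := i.isLt; omega
  exact key k a h (fun i hi => absurd i.isLt (by omega))

open Relation in
theorem pred_steps {P p k} {a a' : Fin k → Tm}
    (h : ∀ i, ReflTransGen (StepT P) (a i) (a' i)) :
    ReflTransGen (StepF P) (.pred p k a) (.pred p k a') := by
  have key : ∀ (j : ℕ) (b : Fin k → Tm), (∀ i, ReflTransGen (StepT P) (b i) (a' i)) →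
      (∀ i : Fin k, j ≤ i.val → b i = a' i) →
      ReflTransGen (StepF P) (.pred p k b) (.pred p k a') := by
    intro j
    induction j with
    | zero =>
        intro b _ h0
        have : b = a' := funext fun i => h0 i (Nat.zero_le _)
        rw [this]
    | succ j ih =>
        intro b hb h0
        by_cases hj : j < k
        · set jf : Fin k := ⟨j, hj⟩
          have step1 : ReflTransGen (StepF P) (.pred p k b) (.pred p k (Function.update b jf (a' jf))) := by
            have := ReflTransGen.lift (fun t => Fm.pred p k (Function.update b jf t))
              (fun x y s => by
                have := StepF.pred (p := p) (a := Function.update b jf x) (j := jf)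
                  (t' := y) (by rw [Function.update_self]; exact s)
                rwa [Function.update_idem] at this) _ _ (hb jf)
            simpa only [Function.onFun, Function.update_eq_self] using this
          refine step1.trans (ih _ (fun i => ?_) (fun i hi => ?_))
          · by_cases hij : i = jf
            · subst hij; rw [Function.update_self]
            · rw [Function.update_of_ne hij]; exact hb i
          · by_cases hij : i = jf
            · subst hij; rw [Function.update_self]
            · rw [Function.update_of_ne hij]
              refine h0 i ?_
              have : i.val ≠ j := fun hv => hij (Fin.ext hv)
              omega
        · refine ih b hb (fun i hi => ?_)
          have := i.isLt; omega
  exact key k a h (fun i hi => absurd i.isLt (by omega))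

open Relation in
mutual
theorem parT_steps {t t' : Tm} (h : ParT t t') :
    ReflTransGen (StepT (fun _ => True)) t t' := by
  cases h with
  | var n => exact .refl
  | fn h => exact fn_steps (fun i => parT_steps (h i))
  | eps h => exact ReflTransGen.lift Tm.eps (fun _ _ s => StepT.eps s) _ _ (parF_steps h)
termination_by szT t
decreasing_by all_goals
  first
    | exact szT_fn_lt _ _
    | exact szT_pred_lt _ _
    | exact szF_mkQ_lt _ _
    | (simp [szT, szF] <;> omega)
theorem parF_steps {F F' : Fm} (h : ParF F F') : ReflTransGen Step F F' := by
  cases h with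
  | pred h => exact pred_steps (fun i => parT_steps (h i))
  | not h => exact ReflTransGen.lift Fm.not (fun _ _ s => StepF.not s) _ _ (parF_steps h)
  | @or F F' G G' h g =>
      exact (ReflTransGen.lift (fun X => Fm.or X G) (fun _ _ s => StepF.orL s)
        _ _ (parF_steps h)).trans
        (ReflTransGen.lift (fun X => Fm.or F' X) (fun _ _ s => StepF.orR s) _ _ (parF_steps g))
  | @and F F' G G' h g =>
      exact (ReflTransGen.lift (fun X => Fm.and X G) (fun _ _ s => StepF.andL s)
        _ _ (parF_steps h)).trans
        (ReflTransGen.lift (fun X => Fm.and F' X) (fun _ _ s => StepF.andR s) _ _ (parF_steps g))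
  | @imp F F' G G' h g =>
      exact (ReflTransGen.lift (fun X => Fm.imp X G) (fun _ _ s => StepF.impL s)
        _ _ (parF_steps h)).trans
        (ReflTransGen.lift (fun X => Fm.imp F' X) (fun _ _ s => StepF.impR s) _ _ (parF_steps g))
  | ex h => exact ReflTransGen.lift Fm.ex (fun _ _ s => StepF.ex s) _ _ (parF_steps h)
  | all h => exact ReflTransGen.lift Fm.all (fun _ _ s => StepF.all s) _ _ (parF_steps h)
  | @root Q A A' h =>
      have ih : ReflTransGen Step A A' := parF_steps h
      have congr : ReflTransGen Step (mkQ Q A) (mkQ Q A') := by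
        cases Q with
        | ex => exact ReflTransGen.lift Fm.ex (fun _ _ s => StepF.ex s) _ _ ih
        | all => exact ReflTransGen.lift Fm.all (fun _ _ s => StepF.all s) _ _ ih
      exact congr.trans (ReflTransGen.single (StepF.root trivial))
termination_by szF F
decreasing_by all_goals
  first
    | exact szT_fn_lt _ _
    | exact szT_pred_lt _ _
    | exact szF_mkQ_lt _ _
    | (simp [szT, szF] <;> omega)
end
theorem rtg_subrel {α} {r s : α → α → Prop} (h : ∀ a b, r a b → Relation.ReflTransGen s a b)
    {a b : α} (hab : Relation.ReflTransGen r a b) : Relation.ReflTransGen s a b := by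
  induction hab with
  | refl => exact .refl
  | tail _ h2 ih => exact ih.trans (h _ _ h2)

/-- the quantifier-elimination rewrite relation `→` is
confluent. -/
theorem stmt13 : ∀ F₀ F₁ F₂ : Fm,
    Relation.ReflTransGen Step F₀ F₁ → Relation.ReflTransGen Step F₀ F₂ →
    ∃ F₃ : Fm, Relation.ReflTransGen Step F₁ F₃ ∧ Relation.ReflTransGen Step F₂ F₃ := by
  intro F₀ F₁ F₂ h1 h2
  have toPar : ∀ {A B : Fm}, Relation.ReflTransGen Step A B → Relation.ReflTransGen ParF A B :=
    fun h => Relation.ReflTransGen.mono (fun _ _ s => stepF_par s) _ _ h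
  have diamond : ∀ a b c, ParF a b → ParF a c →
      ∃ d, Relation.ReflGen ParF b d ∧ Relation.ReflTransGen ParF c d :=
    fun a _ _ hb hc => ⟨cdF a, .single (parF_tri hb), .single (parF_tri hc)⟩
  obtain ⟨F₃, h31, h32⟩ := Relation.church_rosser diamond (toPar h1) (toPar h2)
  exact ⟨F₃, rtg_subrel (fun _ _ p => parF_steps p) h31,
    rtg_subrel (fun _ _ p => parF_steps p) h32⟩
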